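/- Let p ≥ 0 be an integer, n > 0 real, and κ ∈ ℂ such that J_p(κ) = 0 and J_p(√n·κ) = 0. Then F_{p+1}(κ, n) = 0, and if p ≥ 1 also F_{p−1}(κ, n) = 0. In other words, any ITE of the unit disk arising as a common zero of J_p and J_p(√n·) is simultaneously an ITE for the neighboring angular orders p+1 and (when p ≥ 1) p−1, which increases its geometric multiplicity. -/

import Mathlib

open Complex Real Filter Set

/-- Bessel function of the first kind of integer order `p`. -/
noncomputable def besselJ (p : ℕ) (z : ℂ) : ℂ :=
  ∑' m : ℕ, ((-1 : ℂ) ^ m / ((Nat.factorial m : ℂ) * (Nat.factorial (m + p) : ℂ)))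
    * (z / 2) ^ (2 * m + p)

/-- Derivative of the Bessel function. -/
noncomputable def besselJ' (p : ℕ) (z : ℂ) : ℂ := deriv (besselJ p) z

/-- The ITE determinant function `F_p(κ, n)`. -/
noncomputable def Fp (p : ℕ) (κ : ℂ) (n : ℝ) : ℂ :=
  κ * (besselJ' p κ * besselJ p ((Real.sqrt n : ℂ) * κ)
    - (Real.sqrt n : ℂ) * besselJ p κ * besselJ' p ((Real.sqrt n : ℂ) * κ))

/- Auxiliary development. -/

noncomputable def besselA (p m : ℕ) : ℂ :=
  (-1 : ℂ) ^ m / ((Nat.factorial m : ℂ) * (Nat.factorial (m + p) : ℂ))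

lemma besselJ_eq (p : ℕ) (z : ℂ) : besselJ p z = ∑' m : ℕ, besselA p m * (z / 2) ^ (2 * m + p) :=
  rfl

lemma besselA_norm_le (p m : ℕ) : ‖besselA p m‖ ≤ ((m.factorial : ℝ))⁻¹ := by
  have h1 : (1 : ℝ) ≤ ((m + p).factorial : ℝ) := by
    exact_mod_cast Nat.one_le_iff_ne_zero.mpr (Nat.factorial_ne_zero _)
  have hm : (0 : ℝ) < (m.factorial : ℝ) := by exact_mod_cast (Nat.factorial_pos m)
  have : ‖besselA p m‖ = ((m.factorial : ℝ) * ((m + p).factorial : ℝ))⁻¹ := by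
    simp [besselA, norm_div, norm_mul]
  rw [this]
  rw [mul_inv]
  have h2 : ((m + p).factorial : ℝ)⁻¹ ≤ 1 := by
    rw [inv_le_one_iff₀]; right; exact h1
  calc (m.factorial : ℝ)⁻¹ * ((m + p).factorial : ℝ)⁻¹ ≤ (m.factorial : ℝ)⁻¹ * 1 :=
        mul_le_mul_of_nonneg_left h2 (by positivity)
    _ = (m.factorial : ℝ)⁻¹ := mul_one _

lemma summable_u (p : ℕ) (M : ℝ) (hM : 1 ≤ M) :
    Summable (fun m : ℕ => ((2 * m + p + 1 : ℕ) : ℝ) * M ^ (2 * m + p) / m.factorial) := by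
  have h := (Real.summable_pow_div_factorial ((2 * M) ^ 2)).mul_left ((2 * M) ^ p)
  apply Summable.of_nonneg_of_le _ _ h
  · intro m; positivity
  · intro m
    have hMpos : (0 : ℝ) < M := lt_of_lt_of_le one_pos hM
    have key : (2 * M) ^ p * (((2 * M) ^ 2) ^ m / (m.factorial : ℝ))
        = (2 : ℝ) ^ (2 * m + p) * M ^ (2 * m + p) / (m.factorial : ℝ) := by
      rw [← pow_mul, mul_pow, mul_pow, pow_add, pow_add]
      ring
    rw [key]
    have hnat : ((2 * m + p + 1 : ℕ) : ℝ) ≤ (2 : ℝ) ^ (2 * m + p) := by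
      have := Nat.lt_two_pow_self (n := 2 * m + p)
      exact_mod_cast this
    gcongr

lemma summable_of_bound (p : ℕ) (M : ℝ) (hM : 1 ≤ M) (c : ℕ → ℂ)
    (hc : ∀ m, ‖c m‖ ≤ ((2 * m + p + 1 : ℕ) : ℝ) * M ^ (2 * m + p) / m.factorial) :
    Summable c :=
  Summable.of_norm_bounded (summable_u p M hM) hc

lemma besselJ_term_bound (p m : ℕ) (w : ℂ) (M : ℝ) (hM : 1 ≤ M) (hw : ‖w‖ ≤ M)
    (c : ℂ) (hc : ‖c‖ ≤ ((2 * m + p + 1 : ℕ) : ℝ)) :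
    ‖besselA p m * (c * w ^ (2 * m + p))‖
      ≤ ((2 * m + p + 1 : ℕ) : ℝ) * M ^ (2 * m + p) / m.factorial := by
  have hm : (0 : ℝ) < (m.factorial : ℝ) := by exact_mod_cast (Nat.factorial_pos m)
  rw [norm_mul, norm_mul, norm_pow]
  calc ‖besselA p m‖ * (‖c‖ * ‖w‖ ^ (2 * m + p))
      ≤ (m.factorial : ℝ)⁻¹ * (((2 * m + p + 1 : ℕ) : ℝ) * M ^ (2 * m + p)) := by
        apply mul_le_mul (besselA_norm_le p m) ?_ (by positivity) (by positivity)
        exact mul_le_mul hc (pow_le_pow_left₀ (norm_nonneg w) hw _) (by positivity)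
          (by positivity)
    _ = ((2 * m + p + 1 : ℕ) : ℝ) * M ^ (2 * m + p) / m.factorial := by
        field_simp

lemma summable_besselJ (p : ℕ) (z : ℂ) :
    Summable (fun m : ℕ => besselA p m * (z / 2) ^ (2 * m + p)) := by
  set M : ℝ := max 1 ‖z / 2‖ with hMdef
  apply summable_of_bound p M (le_max_left _ _)
  intro m
  have := besselJ_term_bound p m (z / 2) M (le_max_left _ _) (le_max_right _ _) 1
    (by rw [norm_one]; exact_mod_cast Nat.one_le_iff_ne_zero.mpr (by omega))
  simpa using this

lemma besselJ_deriv_term_bound (p m : ℕ) (w : ℂ) (M : ℝ) (hM : 1 ≤ M) (hw : ‖w‖ ≤ M) :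
    ‖besselA p m * (((2 * m + p : ℕ) : ℂ) * w ^ (2 * m + p - 1) * (1 / 2))‖
      ≤ ((2 * m + p + 1 : ℕ) : ℝ) * M ^ (2 * m + p) / m.factorial := by
  have hm : (0 : ℝ) < (m.factorial : ℝ) := by exact_mod_cast (Nat.factorial_pos m)
  have h1 : ‖w‖ ^ (2 * m + p - 1) ≤ M ^ (2 * m + p) :=
    le_trans (pow_le_pow_left₀ (norm_nonneg w) hw _) (pow_le_pow_right₀ hM (by omega))
  have h2 : ((2 * m + p : ℕ) : ℝ) ≤ ((2 * m + p + 1 : ℕ) : ℝ) := by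
    exact_mod_cast Nat.le_succ _
  have hnorms : ‖((2 * m + p : ℕ) : ℂ)‖ = ((2 * m + p : ℕ) : ℝ) := RCLike.norm_natCast _
  have hhalf : ‖(1 / 2 : ℂ)‖ ≤ 1 := by norm_num
  rw [norm_mul, norm_mul, norm_mul, norm_pow]
  calc ‖besselA p m‖ * (‖((2 * m + p : ℕ) : ℂ)‖ * ‖w‖ ^ (2 * m + p - 1) * ‖(1 / 2 : ℂ)‖)
      ≤ (m.factorial : ℝ)⁻¹ * (((2 * m + p + 1 : ℕ) : ℝ) * M ^ (2 * m + p) * 1) := by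
        apply mul_le_mul (besselA_norm_le p m) ?_ (by positivity) (by positivity)
        apply mul_le_mul ?_ hhalf (norm_nonneg _) (by positivity)
        apply mul_le_mul ?_ h1 (by positivity) (by positivity)
        rw [hnorms]; exact h2
    _ = ((2 * m + p + 1 : ℕ) : ℝ) * M ^ (2 * m + p) / m.factorial := by
        field_simp

lemma besselJ_hasDerivAt (p : ℕ) (z : ℂ) :
    HasDerivAt (besselJ p)
      (∑' m : ℕ, besselA p m * (((2 * m + p : ℕ) : ℂ) * (z / 2) ^ (2 * m + p - 1) * (1 / 2))) z := by
  set R : ℝ := ‖z‖ + 1 with hR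
  set M : ℝ := max 1 (R / 2) with hMdef
  have hM : 1 ≤ M := le_max_left _ _
  have hz : z ∈ Metric.ball (0 : ℂ) R := by
    rw [Metric.mem_ball, dist_zero_right]; simp [hR]
  have key := hasDerivAt_tsum_of_isPreconnected
    (u := fun m : ℕ => ((2 * m + p + 1 : ℕ) : ℝ) * M ^ (2 * m + p) / m.factorial)
    (g := fun m y => besselA p m * (y / 2) ^ (2 * m + p))
    (g' := fun m y => besselA p m * (((2 * m + p : ℕ) : ℂ) * (y / 2) ^ (2 * m + p - 1) * (1 / 2)))
    (summable_u p M hM) Metric.isOpen_ball (convex_ball (0 : ℂ) R).isPreconnected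
    (fun m y _ => by
      have h := (((hasDerivAt_id y).div_const 2).pow (2 * m + p)).const_mul (besselA p m)
      simpa using h)
    (fun m y hy => by
      apply besselJ_deriv_term_bound p m (y / 2) M hM
      rw [Metric.mem_ball, dist_zero_right] at hy
      have : ‖y / 2‖ = ‖y‖ / 2 := by rw [norm_div]; norm_num
      rw [this]
      calc ‖y‖ / 2 ≤ R / 2 := by linarith
        _ ≤ M := le_max_right _ _)
    hz (summable_besselJ p z) hz
  exact key

lemma besselJ'_eq (p : ℕ) (z : ℂ) :
    besselJ' p z
      = ∑' m : ℕ, besselA p m * (((2 * m + p : ℕ) : ℂ) * (z / 2) ^ (2 * m + p - 1) * (1 / 2)) :=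
  (besselJ_hasDerivAt p z).deriv

lemma summable_kJ (p : ℕ) (z : ℂ) :
    Summable (fun m : ℕ => besselA p m * (((2 * m + p : ℕ) : ℂ) * (z / 2) ^ (2 * m + p))) := by
  set M : ℝ := max 1 ‖z / 2‖
  apply summable_of_bound p M (le_max_left _ _)
  intro m
  apply besselJ_term_bound p m (z / 2) M (le_max_left _ _) (le_max_right _ _)
  rw [RCLike.norm_natCast]
  exact_mod_cast Nat.le_succ _

lemma summable_pJ (p : ℕ) (c : ℂ) (hc : ‖c‖ ≤ (p : ℝ)) (z : ℂ) :
    Summable (fun m : ℕ => besselA p m * (c * (z / 2) ^ (2 * m + p))) := by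
  set M : ℝ := max 1 ‖z / 2‖
  apply summable_of_bound p M (le_max_left _ _)
  intro m
  apply besselJ_term_bound p m (z / 2) M (le_max_left _ _) (le_max_right _ _)
  refine le_trans hc ?_
  exact_mod_cast Nat.le_of_lt_succ (by omega)

lemma z_mul_besselJ' (p : ℕ) (z : ℂ) :
    z * besselJ' p z
      = ∑' m : ℕ, besselA p m * (((2 * m + p : ℕ) : ℂ) * (z / 2) ^ (2 * m + p)) := by
  rw [besselJ'_eq, ← tsum_mul_left]
  apply tsum_congr
  intro m
  generalize 2 * m + p = k
  cases k with
  | zero => simp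
  | succ j =>
    simp only [Nat.add_sub_cancel, pow_succ]
    push_cast
    ring

lemma factorial_cast_ne (k : ℕ) : ((k.factorial : ℂ)) ≠ 0 := by
  exact_mod_cast (Nat.factorial_pos k).ne'

lemma besselA_rec1 (p m : ℕ) : ((m : ℂ) + 1) * besselA p (m + 1) = - besselA (p + 1) m := by
  simp only [besselA]
  have he2 : m + 1 + p = m + (p + 1) := by omega
  rw [he2, Nat.factorial_succ]
  have hf1 := factorial_cast_ne m
  have hf2 := factorial_cast_ne (m + (p + 1))
  have hm1 : ((m : ℂ) + 1) ≠ 0 := Nat.cast_add_one_ne_zero m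
  push_cast
  field_simp
  ring

lemma besselA_rec2 (p m : ℕ) :
    ((m : ℂ) + (p : ℂ) + 1) * besselA (p + 1) m = besselA p m := by
  simp only [besselA]
  have he2 : m + (p + 1) = (m + p) + 1 := by omega
  rw [he2, Nat.factorial_succ]
  have hf1 := factorial_cast_ne m
  have hf2 := factorial_cast_ne (m + p)
  have hm1 : ((m : ℂ) + (p : ℂ) + 1) ≠ 0 := by
    have h := (Nat.cast_ne_zero (R := ℂ)).mpr (show m + p + 1 ≠ 0 by omega)
    push_cast at h
    exact h
  push_cast
  field_simp

lemma idA (p : ℕ) (z : ℂ) :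
    z * besselJ (p + 1) z = (p : ℂ) * besselJ p z - z * besselJ' p z := by
  have hs1 : Summable (fun m : ℕ => (p : ℂ) * (besselA p m * (z / 2) ^ (2 * m + p))) :=
    (summable_besselJ p z).mul_left _
  have hs2 := summable_kJ p z
  rw [z_mul_besselJ', besselJ_eq p, besselJ_eq (p + 1), ← tsum_mul_left, ← tsum_mul_left,
    ← Summable.tsum_sub hs1 hs2, Summable.tsum_eq_zero_add (hs1.sub hs2)]
  have h0 : (p : ℂ) * (besselA p 0 * (z / 2) ^ (2 * 0 + p))
      - besselA p 0 * (((2 * 0 + p : ℕ) : ℂ) * (z / 2) ^ (2 * 0 + p)) = 0 := by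
    push_cast
    ring
  rw [h0, zero_add]
  apply tsum_congr
  intro m
  have h := besselA_rec1 p m
  have he1 : 2 * (m + 1) + p = 2 * m + (p + 1) + 1 := by omega
  simp only [he1, pow_succ]
  push_cast
  linear_combination (z * (z / 2) ^ (2 * m + (p + 1))) * h

lemma idB (p : ℕ) (z : ℂ) :
    z * besselJ' (p + 1) z = z * besselJ p z - ((p : ℂ) + 1) * besselJ (p + 1) z := by
  have hs1 : Summable (fun m : ℕ => z * (besselA p m * (z / 2) ^ (2 * m + p))) :=
    (summable_besselJ p z).mul_left _
  have hs2 : Summable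
      (fun m : ℕ => ((p : ℂ) + 1) * (besselA (p + 1) m * (z / 2) ^ (2 * m + (p + 1)))) :=
    (summable_besselJ (p + 1) z).mul_left _
  rw [z_mul_besselJ' (p + 1), besselJ_eq p, besselJ_eq (p + 1), ← tsum_mul_left, ← tsum_mul_left,
    ← Summable.tsum_sub hs1 hs2]
  apply tsum_congr
  intro m
  have h := besselA_rec2 p m
  have he1 : 2 * m + (p + 1) = (2 * m + p) + 1 := by omega
  simp only [he1, pow_succ]
  push_cast
  linear_combination (z * (z / 2) ^ (2 * m + p)) * h

/-- common zeros of `J_p` and `J_p(√n·)` are ITEs for neighboring angular orders. -/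
theorem stmt_16 (p : ℕ) (n : ℝ) (hn : 0 < n) (κ : ℂ)
    (hJ : besselJ p κ = 0) (hJn : besselJ p ((Real.sqrt n : ℂ) * κ) = 0) :
    Fp (p + 1) κ n = 0 ∧ (1 ≤ p → Fp (p - 1) κ n = 0) := by
  by_cases hκ : κ = 0
  · subst hκ
    refine ⟨by simp [Fp], fun _ => by simp [Fp]⟩
  have hs : ((Real.sqrt n : ℝ) : ℂ) ≠ 0 := by
    rw [Complex.ofReal_ne_zero]
    exact (Real.sqrt_pos.mpr hn).ne'
  have hμ : ((Real.sqrt n : ℝ) : ℂ) * κ ≠ 0 := mul_ne_zero hs hκ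
  constructor
  · -- F_{p+1} = 0
    have hAκ := idA p κ
    rw [hJ] at hAκ
    have h1 : besselJ (p + 1) κ = - besselJ' p κ := by
      apply mul_left_cancel₀ hκ
      rw [hAκ]; ring
    have hAμ := idA p ((Real.sqrt n : ℂ) * κ)
    rw [hJn] at hAμ
    have h2 : besselJ (p + 1) ((Real.sqrt n : ℂ) * κ) = - besselJ' p ((Real.sqrt n : ℂ) * κ) := by
      apply mul_left_cancel₀ hμ
      rw [hAμ]; ring
    have hBκ := idB p κ
    rw [hJ] at hBκ
    have h3 : besselJ' (p + 1) κ = -((p : ℂ) + 1) * besselJ (p + 1) κ / κ := by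
      field_simp
      linear_combination hBκ
    have hBμ := idB p ((Real.sqrt n : ℂ) * κ)
    rw [hJn] at hBμ
    have h4 : besselJ' (p + 1) ((Real.sqrt n : ℂ) * κ)
        = -((p : ℂ) + 1) * besselJ (p + 1) ((Real.sqrt n : ℂ) * κ) / ((Real.sqrt n : ℂ) * κ) := by
      field_simp
      linear_combination hBμ
    simp only [Fp]
    rw [h3, h4, h1, h2]
    field_simp
    ring
  · -- F_{p-1} = 0 when p ≥ 1
    intro hp
    obtain ⟨q, rfl⟩ : ∃ q, p = q + 1 := ⟨p - 1, by omega⟩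
    simp only [Nat.add_sub_cancel]
    have hAκ := idA q κ
    rw [hJ] at hAκ
    have h1 : besselJ' q κ = (q : ℂ) * besselJ q κ / κ := by
      field_simp
      linear_combination hAκ
    have hAμ := idA q ((Real.sqrt n : ℂ) * κ)
    rw [hJn] at hAμ
    have h2 : besselJ' q ((Real.sqrt n : ℂ) * κ)
        = (q : ℂ) * besselJ q ((Real.sqrt n : ℂ) * κ) / ((Real.sqrt n : ℂ) * κ) := by
      field_simp
      linear_combination hAμ
    simp only [Fp]
    rw [h1, h2]
    field_simp
    ring
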